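/- Let a, b ≥ -1/2 with 0 < |a - b| ≤ 1. Then there exists a constant C, depending only on a and b, such that for every integer k ≥ 10 and all 0 < y < x, I₂ ≤ C · [((a+b)/2 + k)((a+b)/2 + k + 1) / (a/2 + k/2 + 5/4)²] · x² / (x² - y²)², where I₂ = ((a+b)/2 + k)((a+b)/2 + k + 1) x^{b+k-1/2} y^{a+k+5/2} ∫_0^1 s^{(a-b+2)/2} (1-s)^{(a+b)/2+k-1} / (x² - y² s)^{(a+b)/2+k+2} ds. -/

import Mathlib

open MeasureTheory Real

set_option maxHeartbeats 2000000 in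
/-- Refined bound for the term `I₂` arising when differentiating in `x` the integral
representation of the Hankel transplantation kernel `K_{a+k}^{b+k}(x,y)` for `0 < y < x`:
`I₂ ≤ C (((a+b)/2+k)((a+b)/2+k+1)/(a/2+k/2+5/4)²) x²/(x²-y²)²` with `C` independent of
`k ≥ 10`. -/
theorem I2_refined_bound (a b : ℝ) (ha : -1 / 2 ≤ a) (hb : -1 / 2 ≤ b)
    (hab : 0 < |a - b|) (hab' : |a - b| ≤ 1) :
    ∃ C : ℝ, ∀ (k : ℕ), 10 ≤ k → ∀ x y : ℝ, 0 < y → y < x →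
      ((a + b) / 2 + k) * ((a + b) / 2 + k + 1) * x ^ (b + k - 1 / 2) * y ^ (a + k + 5 / 2) *
          (∫ s in Set.Ioo (0 : ℝ) 1,
            s ^ ((a - b + 2) / 2) * (1 - s) ^ ((a + b) / 2 + k - 1) /
              (x ^ 2 - y ^ 2 * s) ^ ((a + b) / 2 + k + 2)) ≤
        C * (((a + b) / 2 + k) * ((a + b) / 2 + k + 1) / (a / 2 + k / 2 + 5 / 4) ^ 2) *
          (x ^ 2 / (x ^ 2 - y ^ 2) ^ 2) := by
  have hab1 : -1 ≤ a - b := (abs_le.1 hab').1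
  refine ⟨2, ?_⟩
  intro k hk x y hy hyx
  have hK : (10:ℝ) ≤ (k:ℝ) := by exact_mod_cast hk
  have hx : 0 < x := hy.trans hyx
  have hX : (0:ℝ) < x^2 := by positivity
  set P : ℝ := (a + b) / 2 + (k:ℝ) with hPdef
  set E : ℝ := a + (k:ℝ) + 5/2 with hEdef
  set D : ℝ := x^2 - y^2 with hDdef
  have hP9 : (9:ℝ) ≤ P := by rw [hPdef]; linarith
  have hP0 : (0:ℝ) < P := by linarith
  have hP1 : (0:ℝ) < P + 1 := by linarith
  have hE12 : (12:ℝ) ≤ E := by rw [hEdef]; linarith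
  have hE0 : (0:ℝ) < E := by linarith
  have hEP : E ≤ 2*P := by rw [hEdef, hPdef]; linarith
  have hD : 0 < D := by
    rw [hDdef]
    linarith only [mul_pos (sub_pos.2 hyx) (by linarith only [hy, hyx] : (0:ℝ) < x + y)]
  have hDne : x^2 - y^2 ≠ 0 := by rw [← hDdef]; exact ne_of_gt hD
  have hden : ∀ s ∈ Set.Icc (0:ℝ) 1, 0 < x^2 - y^2*s := by
    intro s hs
    linarith only [mul_nonneg (sq_nonneg y) (by linarith only [hs.2] : (0:ℝ) ≤ 1 - s),
      mul_pos (sub_pos.2 hyx) (by linarith only [hy, hyx] : (0:ℝ) < x + y)]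
  set W : ℝ → ℝ := fun s => (1 - s) / (x^2 - y^2*s) with hWdef
  set F : ℝ → ℝ := fun s => -((D^2)⁻¹) * (W s ^ P / P - y^2 * W s ^ (P+1) / (P+1)) with hFdef
  set f : ℝ → ℝ := fun s => (1 - s)^(P-1) / (x^2 - y^2*s)^(P+2) with hfdef
  -- derivative of W
  have hWderiv : ∀ s ∈ Set.Ioo (0:ℝ) 1, HasDerivAt W (-D / (x^2 - y^2*s)^2) s := by
    intro s hs
    have hG : 0 < x^2 - y^2*s := hden s ⟨hs.1.le, hs.2.le⟩
    have h1 : HasDerivAt (fun t : ℝ => 1 - t) (-1) s := by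
      exact (hasDerivAt_id' s).const_sub 1
    have h2 : HasDerivAt (fun t : ℝ => x^2 - y^2*t) (-(y^2)) s := by
      simpa using ((hasDerivAt_id' s).const_mul (y^2)).const_sub (x^2)
    have h3 : HasDerivAt (fun t => (1 - t) / (x^2 - y^2*t))
        ((-1 * (x^2 - y^2*s) - (1 - s) * -(y^2)) / (x^2 - y^2*s)^2) s := h1.div h2 (ne_of_gt hG)
    rw [hWdef]
    convert h3 using 1
    rw [hDdef]
    field_simp
    ring
  -- derivative of F
  have hFderiv : ∀ s ∈ Set.Ioo (0:ℝ) 1, HasDerivAt F (f s) s := by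
    intro s hs
    have hG : 0 < x^2 - y^2*s := hden s ⟨hs.1.le, hs.2.le⟩
    have h1s : 0 < 1 - s := by linarith only [hs.2]
    have hWpos : 0 < W s := by
      simp only [hWdef]
      exact div_pos h1s hG
    have hW := hWderiv s hs
    have hWP : HasDerivAt (fun t => W t ^ P) (-D / (x^2-y^2*s)^2 * P * W s ^ (P-1)) s :=
      hW.rpow_const (Or.inl (ne_of_gt hWpos))
    have hWP1 : HasDerivAt (fun t => W t ^ (P+1)) (-D / (x^2-y^2*s)^2 * (P+1) * W s ^ (P+1-1)) s :=
      hW.rpow_const (Or.inl (ne_of_gt hWpos))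
    have hFd : HasDerivAt F (-((D^2)⁻¹) * ((-D / (x^2-y^2*s)^2 * P * W s ^ (P-1))/P
        - (y^2 * (-D / (x^2-y^2*s)^2 * (P+1) * W s ^ (P+1-1)))/(P+1))) s := by
      rw [hFdef]
      exact ((hWP.div_const P).sub ((hWP1.const_mul (y^2)).div_const (P+1))).const_mul (-((D^2)⁻¹))
    convert hFd using 1
    simp only [hfdef]
    have hWv : W s = (1-s)/(x^2-y^2*s) := by simp only [hWdef]
    have hWp : W s ^ (P+1-1) = W s ^ (P-1) * W s := by
      rw [show P+1-1 = P-1+1 by ring, Real.rpow_add_one (ne_of_gt hWpos)]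
    have hWm1 : W s ^ (P-1) = (1-s)^(P-1) / (x^2-y^2*s)^(P-1) := by
      rw [hWv, Real.div_rpow h1s.le hG.le]
    have hGsplit : (x^2-y^2*s)^(P+2) = (x^2-y^2*s)^(P-1) * (x^2-y^2*s)^(3:ℕ) := by
      rw [← Real.rpow_natCast (x^2-y^2*s) 3, ← Real.rpow_add hG]
      congr 1
      ring
    have hGP : 0 < (x^2-y^2*s)^(P-1) := Real.rpow_pos_of_pos hG _
    rw [hGsplit, hWp, hWm1, hWv, hDdef]
    field_simp
    ring
  -- continuity of W and F
  have hWcont : ContinuousOn W (Set.Icc 0 1) := by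
    rw [hWdef]
    apply ContinuousOn.div
    · exact (continuous_const.sub continuous_id).continuousOn
    · exact (continuous_const.sub (continuous_const.mul continuous_id)).continuousOn
    · intro s hs; exact ne_of_gt (hden s hs)
  have hFcont : ContinuousOn F (Set.Icc 0 1) := by
    rw [hFdef]
    apply ContinuousOn.mul continuousOn_const
    apply ContinuousOn.sub
    · exact (hWcont.rpow_const (fun s _ => Or.inr (by linarith only [hP0]))).div_const P
    · exact (continuousOn_const.mul
        (hWcont.rpow_const (fun s _ => Or.inr (by linarith only [hP1])))).div_const (P+1)
  -- integrability of f
  have hfint : IntervalIntegrable f volume 0 1 := by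
    rw [hfdef]
    apply ContinuousOn.intervalIntegrable
    rw [Set.uIcc_of_le (by norm_num : (0:ℝ) ≤ 1)]
    apply ContinuousOn.div
    · exact (continuous_const.sub continuous_id).continuousOn.rpow_const
        (fun s _ => Or.inr (by linarith only [hP9]))
    · exact (continuous_const.sub (continuous_const.mul continuous_id)).continuousOn.rpow_const
        (fun s hs => Or.inl (ne_of_gt (hden s hs)))
    · intro s hs; exact ne_of_gt (Real.rpow_pos_of_pos (hden s hs) _)
  -- FTC
  have hFTC : ∫ s in (0:ℝ)..1, f s = F 1 - F 0 :=
    intervalIntegral.integral_eq_sub_of_hasDerivAt_of_le (by norm_num) hFcont hFderiv hfint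
  have hIoo : ∫ s in Set.Ioo (0:ℝ) 1, f s = F 1 - F 0 := by
    rw [← MeasureTheory.integral_Ioc_eq_integral_Ioo,
      ← intervalIntegral.integral_of_le (by norm_num : (0:ℝ) ≤ 1)]
    exact hFTC
  -- comparison of integrands
  have hmono : (∫ s in Set.Ioo (0:ℝ) 1,
      s ^ ((a - b + 2) / 2) * (1 - s) ^ (P - 1) / (x ^ 2 - y ^ 2 * s) ^ (P + 2))
      ≤ ∫ s in Set.Ioo (0:ℝ) 1, f s := by
    apply MeasureTheory.integral_mono_of_nonneg
    · filter_upwards [MeasureTheory.ae_restrict_mem measurableSet_Ioo] with s hs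
      have hG := hden s ⟨hs.1.le, hs.2.le⟩
      have h1 : (0:ℝ) ≤ s ^ ((a-b+2)/2) := Real.rpow_nonneg hs.1.le _
      have h2 : (0:ℝ) ≤ (1-s)^(P-1) := Real.rpow_nonneg (by linarith only [hs.2] : (0:ℝ) ≤ 1-s) _
      have h3 : (0:ℝ) ≤ (x^2-y^2*s)^(P+2) := (Real.rpow_pos_of_pos hG _).le
      exact div_nonneg (mul_nonneg h1 h2) h3
    · exact (hfint.1).mono_set Set.Ioo_subset_Ioc_self
    · filter_upwards [MeasureTheory.ae_restrict_mem measurableSet_Ioo] with s hs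
      have hG := hden s ⟨hs.1.le, hs.2.le⟩
      have h1 : s ^ ((a-b+2)/2) ≤ 1 := Real.rpow_le_one hs.1.le hs.2.le (by linarith only [hab1])
      have h2 : (0:ℝ) ≤ (1-s)^(P-1) := Real.rpow_nonneg (by linarith only [hs.2] : (0:ℝ) ≤ 1-s) _
      have hGP : 0 < (x^2-y^2*s)^(P+2) := Real.rpow_pos_of_pos hG _
      simp only [hfdef]
      exact (div_le_div_iff_of_pos_right hGP).2 (mul_le_of_le_one_left h2 h1)
  -- value of F 1 - F 0
  have hW1 : W 1 = 0 := by simp [hWdef]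
  have hW0 : W 0 = (x^2)⁻¹ := by simp [hWdef]
  have hF1 : F 1 = 0 := by
    simp [hFdef, hW1, Real.zero_rpow (ne_of_gt hP0), Real.zero_rpow (ne_of_gt hP1)]
  have hB : (0:ℝ) < (x^2)⁻¹ := by positivity
  have hBP : ((x^2)⁻¹) ^ P = x ^ (-(2*P)) := by
    have h1 : (x^2)⁻¹ = x ^ (-2:ℝ) := by
      rw [← Real.rpow_natCast x 2, ← Real.rpow_neg hx.le]
      norm_num
    rw [h1, ← Real.rpow_mul hx.le]
    congr 1
    ring
  have hBP1 : ((x^2)⁻¹) ^ (P+1) = ((x^2)⁻¹)^P * (x^2)⁻¹ :=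
    Real.rpow_add_one (ne_of_gt hB) P
  have hFval : F 1 - F 0 = x ^ (-(2*P)) * (x^2 + P*D) / (P*(P+1)*x^2*D^2) := by
    rw [hF1]
    simp only [hFdef]
    rw [hW0, hBP1, hBP, hDdef]
    field_simp
    ring
  -- exponent juggling
  have hxE : x ^ (b + (k:ℝ) - 1/2) * x ^ (-(2*P)) = x^2 * x^(-E) := by
    rw [← Real.rpow_natCast x 2, ← Real.rpow_add hx, ← Real.rpow_add hx]
    congr 1
    rw [hPdef, hEdef]
    push_cast
    ring
  set ρ : ℝ := y / x with hρdef
  have hρ0 : 0 < ρ := div_pos hy hx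
  have hρ1 : ρ < 1 := (div_lt_one hx).2 hyx
  have hρE2 : ρ ^ E = y ^ E * x ^ (-E) := by
    rw [hρdef, Real.div_rpow hy.le hx.le, Real.rpow_neg hx.le, div_eq_mul_inv]
  set u : ℝ := D / x^2 with hudef
  have hu0 : 0 < u := div_pos hD hX
  have hu1 : 1 - u = ρ^2 := by
    rw [hudef, hρdef, hDdef, div_pow]
    field_simp
    ring
  have hρE3 : ρ ^ E ≤ Real.exp (-u * (E/2)) := by
    have h2 : ρ ^ E = (ρ^2) ^ (E/2) := by
      rw [← Real.rpow_natCast ρ 2, ← Real.rpow_mul hρ0.le]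
      congr 1
      push_cast
      ring
    have hbase : 1 - u ≤ Real.exp (-u) := by
      linarith only [Real.add_one_le_exp (-u)]
    have h4 : (0:ℝ) ≤ 1 - u := by rw [hu1]; positivity
    calc ρ ^ E = (1 - u) ^ (E/2) := by rw [h2, hu1]
      _ ≤ (Real.exp (-u)) ^ (E/2) := Real.rpow_le_rpow h4 hbase (half_pos hE0).le
      _ = Real.exp (-u * (E/2)) := (Real.exp_mul (-u) (E/2)).symm
  have huE : u * Real.exp (-u * (E/2)) * E ≤ 2 := by
    have ht : u*(E/2) + 1 ≤ Real.exp (u*(E/2)) := Real.add_one_le_exp _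
    have h0 : (0:ℝ) < Real.exp (u*(E/2)) := Real.exp_pos _
    have hexp : Real.exp (-u * (E/2)) = (Real.exp (u*(E/2)))⁻¹ := by
      rw [show -u * (E/2) = -(u*(E/2)) by ring, Real.exp_neg]
    rw [hexp]
    have key : u * (Real.exp (u*(E/2)))⁻¹ * E * Real.exp (u*(E/2)) ≤ 2 * Real.exp (u*(E/2)) := by
      have heq : u * (Real.exp (u*(E/2)))⁻¹ * E * Real.exp (u*(E/2)) = u * E := by
        field_simp
      rw [heq]
      linarith only [ht]
    exact le_of_mul_le_mul_right key h0
  -- core inequality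
  have hρE1 : ρ^E ≤ 1 := Real.rpow_le_one hρ0.le hρ1.le hE0.le
  have hc1 : ρ^E * x^2 * E^2 ≤ 4*(P*(P+1))*x^2 := by
    have hE2 : E^2 ≤ 4*(P*(P+1)) := by
      linarith only [mul_nonneg (by linarith only [hEP] : (0:ℝ) ≤ 2*P - E)
        (by linarith only [hE0, hP0, hEP] : (0:ℝ) ≤ 2*P + E), hP0]
    have h1 : ρ^E * x^2 * E^2 ≤ x^2 * E^2 := by
      linarith only [mul_le_mul_of_nonneg_right hρE1 (le_of_lt (mul_pos hX (pow_pos hE0 2)))]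
    linarith only [h1, mul_le_mul_of_nonneg_left hE2 hX.le]
  have hc2 : ρ^E * (P*D) * E^2 ≤ 4*(P*(P+1))*x^2 := by
    have hDu : D = x^2 * u := by rw [hudef]; field_simp
    have h4 : ρ^E * u * E ≤ 2 := by
      have h5 : ρ^E * u ≤ Real.exp (-u * (E/2)) * u := mul_le_mul_of_nonneg_right hρE3 hu0.le
      calc ρ^E * u * E ≤ (Real.exp (-u * (E/2)) * u) * E :=
            mul_le_mul_of_nonneg_right h5 hE0.le
        _ = u * Real.exp (-u * (E/2)) * E := by ring
        _ ≤ 2 := huE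
    calc ρ^E * (P*D) * E^2 = (ρ^E * u * E) * (P * x^2 * E) := by rw [hDu]; ring
      _ ≤ 2 * (P * x^2 * E) := mul_le_mul_of_nonneg_right h4
          (le_of_lt (mul_pos (mul_pos hP0 hX) hE0))
      _ ≤ 4*(P*(P+1))*x^2 := by
          linarith only [mul_nonneg (mul_nonneg hP0.le hX.le)
            (by linarith only [hEP] : (0:ℝ) ≤ 2*(P+1) - E)]

  have hcore : y^E * x^(-E) * (x^2 + P*D) ≤ 8*(P*(P+1))*x^2/E^2 := by
    rw [← hρE2, le_div_iff₀ (pow_pos hE0 2)]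
    have hexpand : ρ^E * (x^2 + P*D) * E^2 = ρ^E * x^2 * E^2 + ρ^E * (P*D) * E^2 := by ring
    rw [hexpand]
    linarith only [hc1, hc2]
  -- assembling
  have hIle : (∫ s in Set.Ioo (0:ℝ) 1,
      s ^ ((a - b + 2) / 2) * (1 - s) ^ (P - 1) / (x ^ 2 - y ^ 2 * s) ^ (P + 2))
      ≤ F 1 - F 0 := hmono.trans_eq hIoo
  have hpre0 : 0 ≤ P * (P+1) * x ^ (b + (k:ℝ) - 1/2) * y ^ E :=
    mul_nonneg (mul_nonneg (mul_nonneg hP0.le hP1.le) (Real.rpow_nonneg hx.le _))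
      (Real.rpow_nonneg hy.le _)
  have hstep := mul_le_mul_of_nonneg_left hIle hpre0
  refine hstep.trans ?_
  rw [hFval]
  have hmid : P * (P+1) * x ^ (b + (k:ℝ) - 1/2) * y ^ E *
      (x ^ (-(2*P)) * (x^2 + P*D) / (P*(P+1)*x^2*D^2))
      = y^E * x^(-E) * (x^2+P*D) / D^2 := by
    calc P * (P+1) * x ^ (b + (k:ℝ) - 1/2) * y ^ E *
        (x ^ (-(2*P)) * (x^2 + P*D) / (P*(P+1)*x^2*D^2))
        = (x ^ (b + (k:ℝ) - 1/2) * x ^ (-(2*P))) *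
          (P*(P+1) * y^E * (x^2 + P*D) / (P*(P+1)*x^2*D^2)) := by ring
      _ = (x^2 * x^(-E)) * (P*(P+1) * y^E * (x^2 + P*D) / (P*(P+1)*x^2*D^2)) := by rw [hxE]
      _ = y^E * x^(-E) * (x^2+P*D) / D^2 := by
          field_simp
  rw [hmid]
  have hQE : a/2 + (k:ℝ)/2 + 5/4 = E/2 := by rw [hEdef]; ring
  rw [hQE]
  have hRHS : 2 * (P * (P+1) / (E/2)^2) * (x^2/D^2) = (8*(P*(P+1))*x^2/E^2)/D^2 := by
    field_simp
    ring
  rw [hRHS]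
  exact (div_le_div_iff_of_pos_right (pow_pos hD 2)).2 hcore
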